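/- Let (ςₙ) be positive reals with minimum ς₁, ∑ 1/ςₙ < ∞, κₖ = ∑ ςₙ^{-k}, and suppose κ₁ = 2cΓ(a)/Γ(q+a) and κ₂ = 4c²Γ(a)²/Γ(q+a)² - 3c²Γ(a)/Γ(2q+a) with a, c > 0, q ∈ ℕ, q ≥ 1, κ₂ > 0. Then 2Γ(q+a)/(cΓ(a)) < 4ς₁ < 8Γ(q+a)Γ(2q+a) / (c·(4Γ(a)Γ(2q+a) - 3Γ(q+a)²)), assuming the sequence has at least two distinct terms. -/

import Mathlib

theorem stmt_13 (q : ℕ) (hq : 1 ≤ q) (a c : ℝ) (ha : 0 < a) (hc : 0 < c)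
    (ς : ℕ → ℝ) (hpos : ∀ n, 0 < ς n) (hmin : ∀ n, ς 0 ≤ ς n)
    (hsum : Summable fun n => 1 / ς n) (hdist : ∃ m, ς m ≠ ς 0)
    (hκ1 : (∑' n : ℕ, 1 / ς n) = 2 * c * Real.Gamma a / Real.Gamma ((q : ℝ) + a))
    (hκ2 : (∑' n : ℕ, (1 / ς n) ^ 2) =
      4 * c ^ 2 * Real.Gamma a ^ 2 / Real.Gamma ((q : ℝ) + a) ^ 2 -
        3 * c ^ 2 * Real.Gamma a / Real.Gamma (2 * (q : ℝ) + a))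
    (hκ2pos : 0 < ∑' n : ℕ, (1 / ς n) ^ 2) :
    2 * Real.Gamma ((q : ℝ) + a) / (c * Real.Gamma a) < 4 * ς 0 ∧
    4 * ς 0 <
      8 * Real.Gamma ((q : ℝ) + a) * Real.Gamma (2 * (q : ℝ) + a) /
        (c * (4 * Real.Gamma a * Real.Gamma (2 * (q : ℝ) + a) -
          3 * Real.Gamma ((q : ℝ) + a) ^ 2)) := by
  set G0 := Real.Gamma a with hG0def
  set G1 := Real.Gamma ((q : ℝ) + a) with hG1def
  set G2 := Real.Gamma (2 * (q : ℝ) + a) with hG2def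
  have hq1 : (1 : ℝ) ≤ (q : ℝ) := by exact_mod_cast hq
  have hG0 : 0 < G0 := Real.Gamma_pos_of_pos ha
  have hG1 : 0 < G1 := Real.Gamma_pos_of_pos (by linarith)
  have hG2 : 0 < G2 := Real.Gamma_pos_of_pos (by linarith)
  obtain ⟨m, hm⟩ := hdist
  have hς0 : 0 < ς 0 := hpos 0
  have hlt : ς 0 < ς m := lt_of_le_of_ne (hmin m) (Ne.symm hm)
  have hm0 : m ≠ 0 := by rintro rfl; exact hm rfl
  -- lower Euler–Rayleigh bound: 1/ς0 < κ₁
  have h1 : 1 / ς 0 < ∑' n, 1 / ς n := by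
    have hle : ∑ n ∈ ({0, m} : Finset ℕ), 1 / ς n ≤ ∑' n, 1 / ς n :=
      Summable.sum_le_tsum _ (fun n _ => by have := hpos n; positivity) hsum
    rw [Finset.sum_pair (Ne.symm hm0)] at hle
    have : 0 < 1 / ς m := by have := hpos m; positivity
    linarith
  -- summability of squares
  have hsqle : ∀ n, (1 / ς n) ^ 2 ≤ (1 / ς 0) * (1 / ς n) := by
    intro n
    have hn := hpos n
    have h : 1 / ς n ≤ 1 / ς 0 := one_div_le_one_div_of_le hς0 (hmin n)
    have hn' : 0 ≤ 1 / ς n := by positivity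
    nlinarith
  have hsq : Summable fun n => (1 / ς n) ^ 2 :=
    Summable.of_nonneg_of_le (fun n => by have := hpos n; positivity) hsqle
      (hsum.mul_left (1 / ς 0))
  -- upper Euler–Rayleigh bound: κ₂ < κ₁/ς0
  have h2 : (∑' n, (1 / ς n) ^ 2) < (∑' n, 1 / ς n) / ς 0 := by
    have hstrict : (1 / ς m) ^ 2 < (1 / ς 0) * (1 / ς m) := by
      have hmpos := hpos m
      have h : 1 / ς m < 1 / ς 0 := one_div_lt_one_div_of_lt hς0 hlt
      have hm' : 0 < 1 / ς m := by positivity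
      nlinarith
    have := Summable.tsum_lt_tsum hsqle hstrict hsq (hsum.mul_left (1 / ς 0))
    rw [tsum_mul_left] at this
    calc (∑' n, (1 / ς n) ^ 2) < 1 / ς 0 * ∑' n, 1 / ς n := this
      _ = (∑' n, 1 / ς n) / ς 0 := by ring
  rw [hκ1] at h1 h2
  rw [hκ2] at h2 hκ2pos
  -- first inequality
  have key1 : G1 < 2 * c * G0 * ς 0 := by
    rw [div_lt_div_iff₀ hς0 hG1] at h1
    linarith
  have key2 : (4 * c ^ 2 * G0 ^ 2 * G2 - 3 * c ^ 2 * G0 * G1 ^ 2) * ς 0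
      < 2 * c * G0 * G1 * G2 := by
    have e : 4 * c ^ 2 * G0 ^ 2 / G1 ^ 2 - 3 * c ^ 2 * G0 / G2
        = (4 * c ^ 2 * G0 ^ 2 * G2 - 3 * c ^ 2 * G0 * G1 ^ 2) / (G1 ^ 2 * G2) := by
      field_simp
    rw [e, div_lt_div_iff₀ (by positivity) hς0] at h2
    have e2 : 2 * c * G0 / G1 * (G1 ^ 2 * G2) = 2 * c * G0 * G1 * G2 := by
      field_simp
    linarith [h2.trans_eq e2]
  have hD : 0 < 4 * G0 * G2 - 3 * G1 ^ 2 := by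
    rw [sub_pos, div_lt_div_iff₀ hG2 (by positivity : (0:ℝ) < G1 ^ 2)] at hκ2pos
    nlinarith [mul_pos (mul_pos (mul_pos hc hc) hG0) hG0, sq_nonneg c]
  constructor
  · rw [div_lt_iff₀ (by positivity)]
    nlinarith
  · rw [lt_div_iff₀ (by positivity)]
    nlinarith [mul_pos hc hG0]
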